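/- The variance of the hashed inner product satisfies Var(⟨x,x'⟩_φ) = (1/m) · ∑_{i≠j} ( x_i² (x'_j)² + x_i x'_i x_j x'_j ). -/

import Mathlib

open Finset

/-- Sign associated to a boolean. -/
noncomputable def sgn (b : Bool) : ℝ := if b then 1 else -1

/-- Hashed inner product for fixed hash `h` and sign `ξ`. -/
noncomputable def hip {d m : ℕ} (h : Fin d → Fin m) (ξ : Fin d → Bool)
    (x x' : Fin d → ℝ) : ℝ :=
  ∑ k : Fin m,
    (∑ j ∈ Finset.univ.filter (fun j => h j = k), sgn (ξ j) * x j) *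
    (∑ j ∈ Finset.univ.filter (fun j => h j = k), sgn (ξ j) * x' j)

/-- Expectation over the uniformly random pair `(h, ξ)`. -/
noncomputable def hashExp (d m : ℕ) (f : (Fin d → Fin m) → (Fin d → Bool) → ℝ) : ℝ :=
  (∑ h : Fin d → Fin m, ∑ ξ : Fin d → Bool, f h ξ) / ((m : ℝ) ^ d * 2 ^ d)



lemma sgn_not (b : Bool) : sgn (!b) = - sgn b := by cases b <;> simp [sgn]
lemma sgn_mul_self (b : Bool) : sgn b * sgn b = 1 := by cases b <;> simp [sgn]

noncomputable def flipE {d : ℕ} (t : Fin d) : (Fin d → Bool) ≃ (Fin d → Bool) where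
  toFun ξ := Function.update ξ t (!(ξ t))
  invFun ξ := Function.update ξ t (!(ξ t))
  left_inv ξ := by
    simp [Function.update_self, Function.update_idem]
  right_inv ξ := by
    simp [Function.update_self, Function.update_idem]

lemma sum_flip {d : ℕ} (t : Fin d) (F : (Fin d → Bool) → ℝ)
    (hF : ∀ ξ, F (Function.update ξ t (!(ξ t))) = - F ξ) :
    ∑ ξ : Fin d → Bool, F ξ = 0 := by
  have h1 := Equiv.sum_comp (flipE t) F
  simp only [flipE, Equiv.coe_fn_mk, hF, Finset.sum_neg_distrib] at h1
  linarith

lemma sum_sgn_pair {d : ℕ} {i j : Fin d} (hij : i ≠ j) :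
    ∑ ξ : Fin d → Bool, sgn (ξ i) * sgn (ξ j) = 0 := by
  apply sum_flip i
  intro ξ
  rw [Function.update_self, Function.update_of_ne (Ne.symm hij), sgn_not]
  ring

lemma quad_zero {d : ℕ} (t a b c : Fin d) (ha : a ≠ t) (hb : b ≠ t) (hc : c ≠ t) :
    ∑ ξ : Fin d → Bool, sgn (ξ t) * sgn (ξ a) * sgn (ξ b) * sgn (ξ c) = 0 := by
  apply sum_flip t
  intro ξ
  rw [Function.update_self, Function.update_of_ne ha, Function.update_of_ne hb,
    Function.update_of_ne hc, sgn_not]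
  ring

lemma sum_sgn_quad {d : ℕ} (i j k l : Fin d) (hij : i ≠ j) (hkl : k ≠ l) :
    ∑ ξ : Fin d → Bool, sgn (ξ i) * sgn (ξ j) * (sgn (ξ k) * sgn (ξ l)) =
      if (k = i ∧ l = j) ∨ (k = j ∧ l = i) then (2:ℝ)^d else 0 := by
  by_cases h1 : k = i ∧ l = j
  · obtain ⟨rfl, rfl⟩ := h1
    rw [if_pos (Or.inl ⟨rfl, rfl⟩)]
    have : ∀ ξ : Fin d → Bool, sgn (ξ k) * sgn (ξ l) * (sgn (ξ k) * sgn (ξ l)) = 1 := by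
      intro ξ
      have := sgn_mul_self (ξ k); have := sgn_mul_self (ξ l); nlinarith
    simp only [this, Finset.sum_const, card_univ, Fintype.card_fun, Fintype.card_bool,
      Fintype.card_fin, nsmul_eq_mul, mul_one, Nat.cast_pow, Nat.cast_ofNat]
  · by_cases h2 : k = j ∧ l = i
    · obtain ⟨rfl, rfl⟩ := h2
      rw [if_pos (Or.inr ⟨rfl, rfl⟩)]
      have : ∀ ξ : Fin d → Bool, sgn (ξ l) * sgn (ξ k) * (sgn (ξ k) * sgn (ξ l)) = 1 := by
        intro ξ
        have := sgn_mul_self (ξ k); have := sgn_mul_self (ξ l); nlinarith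
      simp only [this, Finset.sum_const, card_univ, Fintype.card_fun, Fintype.card_bool,
        Fintype.card_fin, nsmul_eq_mul, mul_one, Nat.cast_pow, Nat.cast_ofNat]
    · rw [if_neg (by tauto)]
      by_cases hki : k = i
      · -- j appears once
        have hlj : l ≠ j := fun h => h1 ⟨hki, h⟩
        have hkj : k ≠ j := hki ▸ hij
        have reord : ∀ ξ : Fin d → Bool,
            sgn (ξ i) * sgn (ξ j) * (sgn (ξ k) * sgn (ξ l)) =
            sgn (ξ j) * sgn (ξ i) * sgn (ξ k) * sgn (ξ l) := by intro ξ; ring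
        simp only [reord]
        exact quad_zero j i k l hij hkj hlj
      · by_cases hli : l = i
        · have hkj : k ≠ j := fun h => h2 ⟨h, hli⟩
          have hlj : l ≠ j := hli ▸ hij
          have reord : ∀ ξ : Fin d → Bool,
              sgn (ξ i) * sgn (ξ j) * (sgn (ξ k) * sgn (ξ l)) =
              sgn (ξ j) * sgn (ξ i) * sgn (ξ k) * sgn (ξ l) := by intro ξ; ring
          simp only [reord]
          exact quad_zero j i k l hij hkj hlj
        · have reord : ∀ ξ : Fin d → Bool,
              sgn (ξ i) * sgn (ξ j) * (sgn (ξ k) * sgn (ξ l)) =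
              sgn (ξ i) * sgn (ξ j) * sgn (ξ k) * sgn (ξ l) := by intro ξ; ring
          simp only [reord]
          exact quad_zero i j k l (Ne.symm hij) hki hli

lemma sum_ind {d m : ℕ} (i j : Fin d) (hij : i ≠ j) :
    ∑ h : Fin d → Fin m, (if h i = h j then (1:ℝ) else 0) = (m:ℝ)^(d-1) := by
  rw [← Equiv.sum_comp (Equiv.piSplitAt j (fun _ : Fin d => Fin m)).symm]
  rw [Fintype.sum_prod_type]
  simp only [Equiv.piSplitAt_symm_apply, dif_pos rfl, dif_neg hij]
  rw [Finset.sum_comm]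
  simp only [dite_true, Finset.sum_ite_eq, Finset.mem_univ, if_true, Finset.sum_const,
    card_univ, Fintype.card_fun, Fintype.card_fin, nsmul_eq_mul, mul_one]
  norm_num [Fintype.card_subtype_compl]


lemma hip_eq {d m : ℕ} (h : Fin d → Fin m) (ξ : Fin d → Bool) (x x' : Fin d → ℝ) :
    hip h ξ x x' = ∑ i : Fin d, ∑ j : Fin d,
      (if h i = h j then (1:ℝ) else 0) * (sgn (ξ i) * sgn (ξ j)) * (x i * x' j) := by
  unfold hip
  have step1 : ∀ k : Fin m,
      (∑ j ∈ Finset.univ.filter (fun j => h j = k), sgn (ξ j) * x j) *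
      (∑ j ∈ Finset.univ.filter (fun j => h j = k), sgn (ξ j) * x' j) =
      ∑ i ∈ Finset.univ.filter (fun i => h i = k),
        ∑ j : Fin d, (if h j = k then (1:ℝ) else 0)
          * ((sgn (ξ i) * sgn (ξ j)) * (x i * x' j)) := by
    intro k
    rw [Finset.sum_mul_sum]
    refine Finset.sum_congr rfl fun i _ => ?_
    rw [Finset.sum_filter]
    refine Finset.sum_congr rfl fun j _ => ?_
    by_cases hc : h j = k <;> simp [hc] <;> ring
  simp only [step1]
  have step2 : ∀ k : Fin m, ∀ i ∈ Finset.univ.filter (fun i => h i = k),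
      (∑ j : Fin d, (if h j = k then (1:ℝ) else 0) * ((sgn (ξ i) * sgn (ξ j)) * (x i * x' j)))
      = ∑ j : Fin d, (if h i = h j then (1:ℝ) else 0) * (sgn (ξ i) * sgn (ξ j)) * (x i * x' j) := by
    intro k i hi
    rw [Finset.mem_filter] at hi
    refine Finset.sum_congr rfl fun j _ => ?_
    rw [hi.2]
    by_cases hc : h j = k
    · rw [if_pos hc, if_pos hc.symm]; ring
    · rw [if_neg hc, if_neg (fun hx => hc hx.symm)]; ring
  rw [Finset.sum_congr rfl fun k _ => Finset.sum_congr rfl (step2 k)]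
  exact Finset.sum_fiberwise Finset.univ h _

noncomputable def offPart {d m : ℕ} (h : Fin d → Fin m) (ξ : Fin d → Bool)
    (x x' : Fin d → ℝ) : ℝ :=
  ∑ i : Fin d, ∑ j ∈ Finset.univ.erase i,
    (if h i = h j then (1:ℝ) else 0) * (sgn (ξ i) * sgn (ξ j)) * (x i * x' j)

lemma hip_decomp {d m : ℕ} (h : Fin d → Fin m) (ξ : Fin d → Bool) (x x' : Fin d → ℝ) :
    hip h ξ x x' = (∑ i : Fin d, x i * x' i) + offPart h ξ x x' := by
  rw [hip_eq]
  unfold offPart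
  rw [← Finset.sum_add_distrib]
  refine Finset.sum_congr rfl fun i _ => ?_
  rw [← Finset.add_sum_erase _ _ (Finset.mem_univ i)]
  congr 1
  rw [if_pos rfl, sgn_mul_self]
  ring


lemma sum_xi_off {d m : ℕ} (h : Fin d → Fin m) (x x' : Fin d → ℝ) :
    ∑ ξ : Fin d → Bool, offPart h ξ x x' = 0 := by
  unfold offPart
  rw [Finset.sum_comm]
  refine Finset.sum_eq_zero fun i _ => ?_
  rw [Finset.sum_comm]
  refine Finset.sum_eq_zero fun j hj => ?_
  have hij : i ≠ j := (Finset.ne_of_mem_erase hj).symm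
  have : ∀ ξ : Fin d → Bool,
      (if h i = h j then (1:ℝ) else 0) * (sgn (ξ i) * sgn (ξ j)) * (x i * x' j)
      = ((if h i = h j then (1:ℝ) else 0) * (x i * x' j)) * (sgn (ξ i) * sgn (ξ j)) := by
    intro ξ; ring
  simp only [this]
  rw [← Finset.mul_sum, sum_sgn_pair hij, mul_zero]

noncomputable def Tm {d m : ℕ} (x x' : Fin d → ℝ) (i j : Fin d)
    (h : Fin d → Fin m) (ξ : Fin d → Bool) : ℝ :=
  (if h i = h j then (1:ℝ) else 0) * (sgn (ξ i) * sgn (ξ j)) * (x i * x' j)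

lemma cell {d m : ℕ} (x x' : Fin d → ℝ) (i j k l : Fin d) (hij : i ≠ j) (hkl : k ≠ l) :
    ∑ h : Fin d → Fin m, ∑ ξ : Fin d → Bool, Tm x x' i j h ξ * Tm x x' k l h ξ =
      if k = i ∧ l = j then (m:ℝ)^(d-1) * 2^d * (x i * x' j)^2
      else if k = j ∧ l = i then (m:ℝ)^(d-1) * 2^d * (x i * x' j * (x j * x' i))
      else 0 := by
  have key : ∀ (h : Fin d → Fin m) (ξ : Fin d → Bool),
      Tm x x' i j h ξ * Tm x x' k l h ξ =
      ((x i * x' j) * (x k * x' l)) *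
        (((if h i = h j then (1:ℝ) else 0) * (if h k = h l then (1:ℝ) else 0)) *
          (sgn (ξ i) * sgn (ξ j) * (sgn (ξ k) * sgn (ξ l)))) := by
    intro h ξ; unfold Tm; ring
  simp only [key]
  have factored : ∑ h : Fin d → Fin m, ∑ ξ : Fin d → Bool,
      ((x i * x' j) * (x k * x' l)) *
        (((if h i = h j then (1:ℝ) else 0) * (if h k = h l then (1:ℝ) else 0)) *
          (sgn (ξ i) * sgn (ξ j) * (sgn (ξ k) * sgn (ξ l)))) =
      ((x i * x' j) * (x k * x' l)) *
        ((∑ h : Fin d → Fin m, (if h i = h j then (1:ℝ) else 0) * (if h k = h l then (1:ℝ) else 0)) *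
         (∑ ξ : Fin d → Bool, sgn (ξ i) * sgn (ξ j) * (sgn (ξ k) * sgn (ξ l)))) := by
    rw [Finset.sum_mul_sum, Finset.mul_sum]
    exact Finset.sum_congr rfl fun h _ => by rw [Finset.mul_sum]
  rw [factored, sum_sgn_quad i j k l hij hkl]
  by_cases h1 : k = i ∧ l = j
  · obtain ⟨hk, hl⟩ := h1
    rw [if_pos (Or.inl ⟨hk, hl⟩), if_pos ⟨hk, hl⟩]
    have : ∀ h : Fin d → Fin m,
        (if h i = h j then (1:ℝ) else 0) * (if h k = h l then (1:ℝ) else 0)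
        = if h i = h j then (1:ℝ) else 0 := by
      intro h; rw [hk, hl]; split_ifs <;> norm_num
    simp only [this]
    rw [sum_ind i j hij, hk, hl]
    ring
  · by_cases h2 : k = j ∧ l = i
    · obtain ⟨hk, hl⟩ := h2
      rw [if_pos (Or.inr ⟨hk, hl⟩), if_neg h1, if_pos ⟨hk, hl⟩]
      have : ∀ h : Fin d → Fin m,
          (if h i = h j then (1:ℝ) else 0) * (if h k = h l then (1:ℝ) else 0)
          = if h i = h j then (1:ℝ) else 0 := by
        intro h
        rw [hk, hl]
        by_cases hc : h i = h j
        · rw [if_pos hc, if_pos hc.symm, mul_one]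
        · rw [if_neg hc, if_neg (fun hx => hc hx.symm), mul_zero]
      simp only [this]
      rw [sum_ind i j hij, hk, hl]
      ring
    · rw [if_neg (by tauto), if_neg h1, if_neg h2, mul_zero, mul_zero]

lemma double_ite {d : ℕ} (a b : Fin d) (hab : b ≠ a) (V : ℝ) :
    ∑ k : Fin d, ∑ l ∈ Finset.univ.erase k, (if k = a ∧ l = b then V else 0) = V := by
  have inner : ∀ k : Fin d,
      (∑ l ∈ Finset.univ.erase k, (if k = a ∧ l = b then V else 0))
      = if k = a then V else 0 := by
    intro k
    by_cases hk : k = a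
    · subst hk
      simp only [eq_self_iff_true, true_and, if_true]
      rw [Finset.sum_ite_eq' (Finset.univ.erase k) b fun _ => V]
      rw [if_pos (Finset.mem_erase.mpr ⟨hab, Finset.mem_univ b⟩)]
    · simp [hk]
  simp only [inner]
  rw [Finset.sum_ite_eq' Finset.univ a fun _ => V, if_pos (Finset.mem_univ a)]

lemma swap2 {α β γ : Type*} [Fintype α] [Fintype β] (s : Finset γ) (f : α → β → γ → ℝ) :
    ∑ a : α, ∑ b : β, ∑ c ∈ s, f a b c = ∑ c ∈ s, ∑ a : α, ∑ b : β, f a b c := by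
  have h1 : ∀ a : α, ∑ b : β, ∑ c ∈ s, f a b c = ∑ c ∈ s, ∑ b : β, f a b c :=
    fun a => Finset.sum_comm
  simp only [h1]
  exact Finset.sum_comm


lemma iteval {d m : ℕ} (x x' : Fin d → ℝ) (i j k : Fin d) (hij : i ≠ j) :
    ∑ h : Fin d → Fin m, ∑ ξ : Fin d → Bool,
      ∑ l ∈ Finset.univ.erase k, Tm x x' i j h ξ * Tm x x' k l h ξ =
    ∑ l ∈ Finset.univ.erase k,
      (if k = i ∧ l = j then (m:ℝ)^(d-1) * 2^d * (x i * x' j)^2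
       else if k = j ∧ l = i then (m:ℝ)^(d-1) * 2^d * (x i * x' j * (x j * x' i))
       else 0) := by
  rw [swap2 (Finset.univ.erase k) (fun h ξ l => Tm x x' i j h ξ * Tm x x' k l h ξ)]
  exact Finset.sum_congr rfl fun l hl =>
    cell x x' i j k l hij (Finset.ne_of_mem_erase hl).symm

lemma L2 {d m : ℕ} (x x' : Fin d → ℝ) (i j : Fin d) (hij : i ≠ j) :
    ∑ h : Fin d → Fin m, ∑ ξ : Fin d → Bool,
      ∑ k : Fin d, ∑ l ∈ Finset.univ.erase k, Tm x x' i j h ξ * Tm x x' k l h ξ =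
    (m:ℝ)^(d-1) * 2^d * (x i ^ 2 * x' j ^ 2 + x i * x' i * x j * x' j) := by
  rw [swap2, Finset.sum_congr rfl fun k _ => iteval x x' i j k hij]
  have split : ∀ (k l : Fin d),
      (if k = i ∧ l = j then (m:ℝ)^(d-1) * 2^d * (x i * x' j)^2
       else if k = j ∧ l = i then (m:ℝ)^(d-1) * 2^d * (x i * x' j * (x j * x' i))
       else 0)
      = (if k = i ∧ l = j then (m:ℝ)^(d-1) * 2^d * (x i * x' j)^2 else 0)
        + (if k = j ∧ l = i then (m:ℝ)^(d-1) * 2^d * (x i * x' j * (x j * x' i)) else 0) := by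
    intro k l
    by_cases h1 : k = i ∧ l = j
    · have h2 : ¬(k = j ∧ l = i) := by
        rintro ⟨hkj, _⟩; exact hij (h1.1.symm.trans hkj)
      rw [if_pos h1, if_pos h1, if_neg h2, add_zero]
    · rw [if_neg h1, if_neg h1, zero_add]
  simp only [split]
  rw [Finset.sum_congr rfl fun k (_ : k ∈ Finset.univ) => Finset.sum_add_distrib,
    Finset.sum_add_distrib, double_ite i j (Ne.symm hij), double_ite j i hij]
  ring

lemma L3 {d m : ℕ} (x x' : Fin d → ℝ) (i : Fin d) :
    ∑ h : Fin d → Fin m, ∑ ξ : Fin d → Bool,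
      ∑ j ∈ Finset.univ.erase i, ∑ k : Fin d, ∑ l ∈ Finset.univ.erase k,
        Tm x x' i j h ξ * Tm x x' k l h ξ =
    (m:ℝ)^(d-1) * 2^d * ∑ j ∈ Finset.univ.erase i,
      (x i ^ 2 * x' j ^ 2 + x i * x' i * x j * x' j) := by
  rw [swap2, Finset.mul_sum]
  exact Finset.sum_congr rfl fun j hj =>
    L2 x x' i j (Finset.ne_of_mem_erase hj).symm

lemma sum_off_sq {d m : ℕ} (x x' : Fin d → ℝ) :
    ∑ h : Fin d → Fin m, ∑ ξ : Fin d → Bool, (offPart h ξ x x')^2 =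
      (m:ℝ)^(d-1) * 2^d *
        ∑ i : Fin d, ∑ j ∈ Finset.univ.erase i,
          (x i ^ 2 * x' j ^ 2 + x i * x' i * x j * x' j) := by
  have expand : ∀ (h : Fin d → Fin m) (ξ : Fin d → Bool),
      (offPart h ξ x x')^2 =
      ∑ i : Fin d, ∑ j ∈ Finset.univ.erase i, ∑ k : Fin d, ∑ l ∈ Finset.univ.erase k,
        Tm x x' i j h ξ * Tm x x' k l h ξ := by
    intro h ξ
    rw [sq]
    unfold offPart
    rw [Finset.sum_mul]
    refine Finset.sum_congr rfl fun i _ => ?_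
    rw [Finset.sum_mul]
    refine Finset.sum_congr rfl fun j _ => ?_
    rw [Finset.mul_sum]
    exact Finset.sum_congr rfl fun k _ => Finset.mul_sum _ _ _
  simp only [expand]
  rw [swap2, Finset.mul_sum]
  exact Finset.sum_congr rfl fun i _ => L3 x x' i

/-- Variance of the hashed inner product:
`Var(⟨x,x'⟩_φ) = (1/m) ∑_{i≠j} (x_i² x'_j² + x_i x'_i x_j x'_j)`. -/
theorem hash_kernel_variance (d m : ℕ) (hm : 0 < m) (x x' : Fin d → ℝ) :
    hashExp d m (fun h ξ => (hip h ξ x x') ^ 2) -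
        (hashExp d m (fun h ξ => hip h ξ x x')) ^ 2 =
      (1 / (m : ℝ)) *
        ∑ i : Fin d, ∑ j ∈ Finset.univ.erase i,
          (x i ^ 2 * x' j ^ 2 + x i * x' i * x j * x' j) := by
  rcases Nat.eq_zero_or_pos d with hd | hd
  · subst hd
    simp [hashExp, hip]
  · set D := ∑ i : Fin d, x i * x' i with hD
    set SS := ∑ i : Fin d, ∑ j ∈ Finset.univ.erase i,
      (x i ^ 2 * x' j ^ 2 + x i * x' i * x j * x' j) with hSt
    have num1 : ∑ h : Fin d → Fin m, ∑ ξ : Fin d → Bool, hip h ξ x x'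
        = ((m:ℝ)^d * 2^d) * D := by
      have inner : ∀ h : Fin d → Fin m, ∑ ξ : Fin d → Bool, hip h ξ x x' = 2^d * D := by
        intro h
        simp only [hip_decomp]
        rw [Finset.sum_add_distrib, sum_xi_off, add_zero, Finset.sum_const, card_univ]
        simp [Fintype.card_fun, hD]
      simp only [inner]
      rw [Finset.sum_const, card_univ]
      simp [Fintype.card_fun]
      ring
    have num2 : ∑ h : Fin d → Fin m, ∑ ξ : Fin d → Bool, (hip h ξ x x')^2
        = ((m:ℝ)^d * 2^d) * D^2 + (m:ℝ)^(d-1) * 2^d * SS := by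
      have inner : ∀ h : Fin d → Fin m, ∑ ξ : Fin d → Bool, (hip h ξ x x')^2
          = 2^d * D^2 + ∑ ξ : Fin d → Bool, (offPart h ξ x x')^2 := by
        intro h
        have e : ∀ ξ : Fin d → Bool, (hip h ξ x x')^2
            = D^2 + (2*D) * offPart h ξ x x' + (offPart h ξ x x')^2 := by
          intro ξ; rw [hip_decomp]; ring
        simp only [e]
        rw [Finset.sum_add_distrib, Finset.sum_add_distrib, ← Finset.mul_sum,
          sum_xi_off, mul_zero, add_zero, Finset.sum_const, card_univ]
        simp [Fintype.card_fun]
      simp only [inner]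
      rw [Finset.sum_add_distrib, sum_off_sq, Finset.sum_const, card_univ]
      simp only [Fintype.card_fun, Fintype.card_fin, nsmul_eq_mul, Nat.cast_pow,
        Nat.cast_ofNat]
      rw [← hSt]
      ring
    unfold hashExp
    rw [num1, num2]
    have hm0 : (m:ℝ) ≠ 0 := Nat.cast_ne_zero.mpr hm.ne'
    have h20 : ((2:ℝ))^d ≠ 0 := by positivity
    have hmp : ((m:ℝ))^(d-1) ≠ 0 := pow_ne_zero _ hm0
    have hpow : (m:ℝ)^d = (m:ℝ)^(d-1) * m := by
      conv_lhs => rw [← Nat.sub_add_cancel hd]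
      rw [pow_succ]
    rw [hpow]
    field_simp
    ring
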